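/- arXiv:1805.11858 — 3 statements merged into one kernel-verified Lean document; each statement's English description precedes it below -/
import Mathlib

section
/- Let (π,H) be a time-variant semi-conjugacy from a control system Σ₁ to a control system Σ₂, let (K,Q) be an admissible pair for Σ₁ with π_t(Q) ⊆ π₀(Q) for all t > 0. Then (π₀(K), π₀(Q)) is an admissible pair for Σ₂ and P_inv(f∘H, K, Q; Σ₁) ≥ P_inv(f, π₀(K), π₀(Q); Σ₂) for all f ∈ C(U₂,ℝ). -/
open scoped ENNReal
open Filter Set

noncomputable section

variable {M V : Type*}

/-- `S` is a `(τ,K,Q)`-spanning set of control functions. -/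
def IsSpanningSet (φ : ℝ → M → (ℝ → V) → M) (𝒰 : Set (ℝ → V)) (τ : ℝ)
    (K Q : Set M) (S : Set (ℝ → V)) : Prop :=
  S ⊆ 𝒰 ∧ ∀ x ∈ K, ∃ ω ∈ S, ∀ t ∈ Set.Icc (0:ℝ) τ, φ t x ω ∈ Q

/-- `(S_τ f)(ω) = ∫₀^τ f(ω(t)) dt`. -/
def birkhoff (f : V → ℝ) (τ : ℝ) (ω : ℝ → V) : ℝ := ∫ t in (0:ℝ)..τ, f (ω t)

/-- `Σ_{ω ∈ S} e^{(S_τ f)(ω)}`, valued in `ℝ≥0∞`. -/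
def spanSum (f : V → ℝ) (τ : ℝ) (S : Set (ℝ → V)) : ℝ≥0∞ :=
  ∑' ω : S, ENNReal.ofReal (Real.exp (birkhoff f τ ω.1))

/-- `a_τ(f,K,Q)`: infimum of the exponential sums over `(τ,K,Q)`-spanning sets. -/
def aInv (φ : ℝ → M → (ℝ → V) → M) (𝒰 : Set (ℝ → V)) (f : V → ℝ) (τ : ℝ)
    (K Q : Set M) : ℝ≥0∞ :=
  ⨅ (S : Set (ℝ → V)) (_ : IsSpanningSet φ 𝒰 τ K Q S), spanSum f τ S

/-- `r_inv(τ,K,Q)`: minimal cardinality of a `(τ,K,Q)`-spanning set. -/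
def rInv (φ : ℝ → M → (ℝ → V) → M) (𝒰 : Set (ℝ → V)) (τ : ℝ) (K Q : Set M) : ℝ≥0∞ :=
  ⨅ (S : Set (ℝ → V)) (_ : IsSpanningSet φ 𝒰 τ K Q S), (S.encard : ℝ≥0∞)

/-- Invariance pressure `P_inv(f,K,Q) = limsup_{τ→∞} (1/τ) log a_τ(f,K,Q)`. -/
def Pinv (φ : ℝ → M → (ℝ → V) → M) (𝒰 : Set (ℝ → V)) (f : V → ℝ) (K Q : Set M) : EReal :=
  Filter.limsup (fun τ : ℝ => ((τ : EReal))⁻¹ * ENNReal.log (aInv φ 𝒰 f τ K Q)) Filter.atTop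

/-- Invariance entropy `h_inv(K,Q) = limsup_{τ→∞} (1/τ) log r_inv(τ,K,Q)`. -/
def hInv (φ : ℝ → M → (ℝ → V) → M) (𝒰 : Set (ℝ → V)) (K Q : Set M) : EReal :=
  Filter.limsup (fun τ : ℝ => ((τ : EReal))⁻¹ * ENNReal.log (rInv φ 𝒰 τ K Q)) Filter.atTop

/-- `(K,Q)` is an admissible pair. -/
def Admissible [TopologicalSpace M] (φ : ℝ → M → (ℝ → V) → M) (𝒰 : Set (ℝ → V))
    (K Q : Set M) : Prop :=
  IsCompact K ∧ K ⊆ Q ∧ ∀ x ∈ K, ∃ ω ∈ 𝒰, ∀ t : ℝ, 0 ≤ t → φ t x ω ∈ Q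

/-- Concatenation `ω₁ ∙_τ ω₂` of two control functions at time `τ`. -/
def concatCtrl (τ : ℝ) (ω₁ ω₂ : ℝ → V) : ℝ → V := fun t => if t ≤ τ then ω₁ t else ω₂ (t - τ)

/-- Cocycle property of the solution map. -/
def Cocycle (φ : ℝ → M → (ℝ → V) → M) : Prop :=
  ∀ (t s : ℝ), 0 ≤ t → 0 ≤ s → ∀ (x : M) (ω : ℝ → V),
    φ (t + s) x ω = φ t (φ s x ω) (fun r => ω (r + s))

/-- `𝒰` is closed under concatenation of controls. -/
def ConcatClosed (𝒰 : Set (ℝ → V)) : Prop :=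
  ∀ ω₁ ∈ 𝒰, ∀ ω₂ ∈ 𝒰, ∀ τ : ℝ, 0 < τ → concatCtrl τ ω₁ ω₂ ∈ 𝒰

/-- `Q` is controlled invariant. -/
def ControlledInvariant (φ : ℝ → M → (ℝ → V) → M) (𝒰 : Set (ℝ → V)) (Q : Set M) : Prop :=
  ∀ x ∈ Q, ∃ ω ∈ 𝒰, ∀ t : ℝ, 0 ≤ t → φ t x ω ∈ Q

/-- The positive orbit `O⁺(x)`. -/
def posOrbit (φ : ℝ → M → (ℝ → V) → M) (𝒰 : Set (ℝ → V)) (x : M) : Set M :=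
  {y | ∃ t : ℝ, 0 < t ∧ ∃ ω ∈ 𝒰, φ t x ω = y}

/-- `Q` satisfies the no-return property. -/
def NoReturn (φ : ℝ → M → (ℝ → V) → M) (𝒰 : Set (ℝ → V)) (Q : Set M) : Prop :=
  ∀ x ∈ Q, ∀ τ : ℝ, 0 < τ → ∀ ω ∈ 𝒰, φ τ x ω ∈ Q → ∀ t ∈ Set.Icc (0:ℝ) τ, φ t x ω ∈ Q

/-- `D` is a control set: controlled invariant, approximately controllable, and maximal. -/
def IsControlSet [TopologicalSpace M] (φ : ℝ → M → (ℝ → V) → M) (𝒰 : Set (ℝ → V))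
    (D : Set M) : Prop :=
  D.Nonempty ∧ ControlledInvariant φ 𝒰 D ∧ (∀ x ∈ D, D ⊆ closure (posOrbit φ 𝒰 x)) ∧
    ∀ D' : Set M, D ⊆ D' → ControlledInvariant φ 𝒰 D' →
      (∀ x ∈ D', D' ⊆ closure (posOrbit φ 𝒰 x)) → D' = D

end

/-- a time-variant semi-conjugacy `(π,H)` maps an admissible pair `(K,Q)`
of `Σ₁` to an admissible pair `(π₀(K),π₀(Q))` of `Σ₂` and the pressure decreases:
`P_inv(f∘H,K,Q;Σ₁) ≥ P_inv(f,π₀(K),π₀(Q);Σ₂)`. -/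
theorem stmt11 {M₁ M₂ V₁ V₂ : Type*} [TopologicalSpace M₁] [TopologicalSpace M₂]
    [TopologicalSpace V₁] [TopologicalSpace V₂]
    (φ₁ : ℝ → M₁ → (ℝ → V₁) → M₁) (φ₂ : ℝ → M₂ → (ℝ → V₂) → M₂)
    (𝒰₁ : Set (ℝ → V₁)) (𝒰₂ : Set (ℝ → V₂)) (U₂ : Set V₂)
    (π : ℝ → M₁ → M₂) (H : V₁ → V₂)
    (hπcont : Continuous fun p : ℝ × M₁ => π p.1 p.2) (hHcont : Continuous H)
    (hH𝒰 : ∀ ω ∈ 𝒰₁, (fun t => H (ω t)) ∈ 𝒰₂)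
    (hconj : ∀ t : ℝ, 0 ≤ t → ∀ (x : M₁), ∀ ω ∈ 𝒰₁,
      π t (φ₁ t x ω) = φ₂ t (π 0 x) (fun s => H (ω s)))
    (K Q : Set M₁) (hadm : Admissible φ₁ 𝒰₁ K Q)
    (hπQ : ∀ t : ℝ, 0 < t → π t '' Q ⊆ π 0 '' Q)
    (f : V₂ → ℝ) (hf : Continuous f) :
    Admissible φ₂ 𝒰₂ (π 0 '' K) (π 0 '' Q) ∧
    Pinv φ₂ 𝒰₂ f (π 0 '' K) (π 0 '' Q) ≤ Pinv φ₁ 𝒰₁ (fun u => f (H u)) K Q := by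
  obtain ⟨hKc, hKQ, hadm3⟩ := hadm
  have hπ0 : Continuous (π 0) := hπcont.comp (continuous_const.prodMk continuous_id)
  -- key: images of spanning sets are spanning
  have key : ∀ τ : ℝ, ∀ S : Set (ℝ → V₁), IsSpanningSet φ₁ 𝒰₁ τ K Q S →
      IsSpanningSet φ₂ 𝒰₂ τ (π 0 '' K) (π 0 '' Q) ((fun ω t => H (ω t)) '' S) := by
    intro τ S ⟨hS𝒰, hSspan⟩
    constructor
    · rintro _ ⟨ω, hω, rfl⟩
      exact hH𝒰 ω (hS𝒰 hω)
    · rintro _ ⟨x, hx, rfl⟩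
      obtain ⟨ω, hωS, hωQ⟩ := hSspan x hx
      refine ⟨fun t => H (ω t), ⟨ω, hωS, rfl⟩, fun t ht => ?_⟩
      have h1 : φ₂ t (π 0 x) (fun s => H (ω s)) = π t (φ₁ t x ω) :=
        (hconj t ht.1 x ω (hS𝒰 hωS)).symm
      rw [h1]
      rcases eq_or_lt_of_le ht.1 with h0 | h0
      · exact ⟨φ₁ t x ω, hωQ t ht, by rw [← h0]⟩
      · exact hπQ t h0 ⟨φ₁ t x ω, hωQ t ht, rfl⟩
  have haInv : ∀ τ : ℝ, aInv φ₂ 𝒰₂ f τ (π 0 '' K) (π 0 '' Q)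
      ≤ aInv φ₁ 𝒰₁ (fun u => f (H u)) τ K Q := by
    intro τ
    refine le_iInf₂ fun S hS => ?_
    refine le_trans (iInf₂_le _ (key τ S hS)) ?_
    -- spanSum over image ≤ spanSum over S
    have hsurj : Function.Surjective
        (fun ω : S => (⟨fun t => H (ω.1 t), ⟨ω.1, ω.2, rfl⟩⟩ :
          ((fun ω t => H (ω t)) '' S))) := by
      rintro ⟨_, ω, hω, rfl⟩
      exact ⟨⟨ω, hω⟩, rfl⟩
    calc spanSum f τ ((fun ω t => H (ω t)) '' S)
        ≤ ∑' ω : S, ENNReal.ofReal (Real.exp (birkhoff f τ (fun t => H (ω.1 t)))) :=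
          ENNReal.tsum_le_tsum_comp_of_surjective hsurj _
      _ = spanSum (fun u => f (H u)) τ S := rfl
  refine ⟨⟨hKc.image hπ0, Set.image_mono hKQ, ?_⟩, ?_⟩
  · rintro _ ⟨x, hx, rfl⟩
    obtain ⟨ω, hω, hωQ⟩ := hadm3 x hx
    refine ⟨fun t => H (ω t), hH𝒰 ω hω, fun t ht => ?_⟩
    rw [← hconj t ht x ω hω]
    rcases eq_or_lt_of_le ht with h0 | h0
    · exact ⟨φ₁ t x ω, hωQ t ht, by rw [← h0]⟩
    · exact hπQ t h0 ⟨φ₁ t x ω, hωQ t ht, rfl⟩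
  · refine Filter.limsup_le_limsup (Filter.eventually_atTop.2 ⟨1, fun τ hτ => ?_⟩)
    have hτ0 : (0 : EReal) ≤ ((τ : EReal))⁻¹ :=
      EReal.inv_nonneg_of_nonneg (by exact_mod_cast le_trans zero_le_one hτ)
    exact mul_le_mul_of_nonneg_left (ENNReal.log_monotone (haInv τ)) hτ0
end

section
/- If (π,H) is a time-variant conjugacy from Σ₁ to Σ₂ (i.e., each π_t and H are homeomorphisms) and (K,Q) is admissible for Σ₁ with π_t(Q) ⊆ π₀(Q) for all t > 0 and π_t^{-1}(π₀(Q)) ⊆ Q for all t > 0, then P_inv(f∘H, K, Q; Σ₁) = P_inv(f, π₀(K), π₀(Q); Σ₂) for all f ∈ C(U₂,ℝ). -/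
open scoped ENNReal
open Filter Set

lemma tsum_image_aux {γ β : Type*} (F : β → ℝ≥0∞) (g : γ → β) (s : Set γ)
    (hg : Function.Injective g) :
    ∑' x : s, F (g x.1) = ∑' y : (g '' s), F y.1 :=
  (Equiv.Set.imageOfInjOn g s hg.injOn).tsum_eq (fun y : (g '' s) => F y.1)

/-- for a time-variant conjugacy `(π,H)` (each `π_t` and `H` homeomorphisms)
with `π_t(Q) ⊆ π₀(Q)` and `π_t⁻¹(π₀(Q)) ⊆ Q` for all `t > 0`, the invariance pressures agree:
`P_inv(f∘H,K,Q;Σ₁) = P_inv(f,π₀(K),π₀(Q);Σ₂)`. -/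
theorem stmt12 {M₁ M₂ V₁ V₂ : Type*} [TopologicalSpace M₁] [TopologicalSpace M₂]
    [TopologicalSpace V₁] [TopologicalSpace V₂]
    (φ₁ : ℝ → M₁ → (ℝ → V₁) → M₁) (φ₂ : ℝ → M₂ → (ℝ → V₂) → M₂)
    (𝒰₁ : Set (ℝ → V₁)) (𝒰₂ : Set (ℝ → V₂))
    (π : ℝ → M₁ → M₂) (H : V₁ → V₂)
    (hπcont : Continuous fun p : ℝ × M₁ => π p.1 p.2)
    (hπhomeo : ∀ t : ℝ, ∃ e : M₁ ≃ₜ M₂, ⇑e = π t)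
    (hHhomeo : ∃ eH : V₁ ≃ₜ V₂, ⇑eH = H)
    (hH𝒰 : ∀ ω ∈ 𝒰₁, (fun t => H (ω t)) ∈ 𝒰₂)
    (hH𝒰' : ∀ ν ∈ 𝒰₂, ∀ ω : ℝ → V₁, (∀ t, H (ω t) = ν t) → ω ∈ 𝒰₁)
    (hconj : ∀ t : ℝ, 0 ≤ t → ∀ (x : M₁), ∀ ω ∈ 𝒰₁,
      π t (φ₁ t x ω) = φ₂ t (π 0 x) (fun s => H (ω s)))
    (K Q : Set M₁) (hadm : Admissible φ₁ 𝒰₁ K Q)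
    (hπQ : ∀ t : ℝ, 0 < t → π t '' Q ⊆ π 0 '' Q)
    (hπQ' : ∀ t : ℝ, 0 < t → (π t) ⁻¹' (π 0 '' Q) ⊆ Q)
    (f : V₂ → ℝ) (hf : Continuous f) :
    Pinv φ₁ 𝒰₁ (fun u => f (H u)) K Q = Pinv φ₂ 𝒰₂ f (π 0 '' K) (π 0 '' Q) := by
  obtain ⟨eH, heH⟩ := hHhomeo
  obtain ⟨e0, he0⟩ := hπhomeo 0
  have hHinv : ∀ v : V₂, H (eH.symm v) = v := fun v => by
    rw [← heH]; exact eH.apply_symm_apply v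
  have hπ0inj : Function.Injective (π 0) := he0 ▸ e0.injective
  have key : ∀ τ : ℝ, aInv φ₁ 𝒰₁ (fun u => f (H u)) τ K Q
      = aInv φ₂ 𝒰₂ f τ (π 0 '' K) (π 0 '' Q) := by
    intro τ
    apply le_antisymm
    · -- from a spanning set S₂ for Σ₂ build one for Σ₁
      refine le_iInf₂ fun S₂ hS₂ => ?_
      set g : (ℝ → V₂) → (ℝ → V₁) := fun ν t => eH.symm (ν t) with hg
      have hginj : Function.Injective g := fun a b h =>
        funext fun t => eH.symm.injective (congrFun h t)
      have hHg : ∀ ν : ℝ → V₂, (fun s => H (g ν s)) = ν :=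
        fun ν => funext fun s => hHinv (ν s)
      have hg𝒰 : ∀ ν ∈ S₂, g ν ∈ 𝒰₁ := fun ν hν =>
        hH𝒰' ν (hS₂.1 hν) (g ν) (fun t => hHinv (ν t))
      refine iInf₂_le_of_le (g '' S₂) ⟨?_, ?_⟩ ?_
      · rintro _ ⟨ν, hν, rfl⟩; exact hg𝒰 ν hν
      · intro x hx
        obtain ⟨ν, hνS, hν⟩ := hS₂.2 (π 0 x) ⟨x, hx, rfl⟩
        refine ⟨g ν, ⟨ν, hνS, rfl⟩, fun t ht => ?_⟩
        have hconj' := hconj t ht.1 x (g ν) (hg𝒰 ν hνS)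
        rw [hHg] at hconj'
        have hmem : π t (φ₁ t x (g ν)) ∈ π 0 '' Q := hconj' ▸ hν t ht
        rcases lt_or_eq_of_le ht.1 with h0 | h0
        · exact hπQ' t h0 hmem
        · subst h0
          obtain ⟨q, hq, hq'⟩ := hmem
          exact (hπ0inj hq') ▸ hq
      · refine le_of_eq ?_
        have h1 := (tsum_image_aux
          (fun b => ENNReal.ofReal (Real.exp (birkhoff (fun u => f (H u)) τ b))) g S₂ hginj).symm
        refine h1.trans (tsum_congr fun ν => ?_)
        have : birkhoff (fun u => f (H u)) τ (g ν.1) = birkhoff f τ ν.1 := by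
          unfold birkhoff
          exact intervalIntegral.integral_congr fun t _ => by simp only [hg, hHinv]
        rw [this]
    · -- from a spanning set S₁ for Σ₁ build one for Σ₂
      refine le_iInf₂ fun S₁ hS₁ => ?_
      set g : (ℝ → V₁) → (ℝ → V₂) := fun ω t => H (ω t) with hg
      have hginj : Function.Injective g := fun a b h =>
        funext fun t => (heH ▸ eH.injective : Function.Injective H) (congrFun h t)
      refine iInf₂_le_of_le (g '' S₁) ⟨?_, ?_⟩ ?_
      · rintro _ ⟨ω, hω, rfl⟩; exact hH𝒰 ω (hS₁.1 hω)
      · rintro _ ⟨x, hx, rfl⟩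
        obtain ⟨ω, hωS, hω⟩ := hS₁.2 x hx
        refine ⟨g ω, ⟨ω, hωS, rfl⟩, fun t ht => ?_⟩
        have hconj' := hconj t ht.1 x ω (hS₁.1 hωS)
        rw [show φ₂ t (π 0 x) (g ω) = π t (φ₁ t x ω) from hconj'.symm]
        rcases lt_or_eq_of_le ht.1 with h0 | h0
        · exact hπQ t h0 ⟨_, hω t ht, rfl⟩
        · subst h0; exact ⟨_, hω 0 ht, rfl⟩
      · refine le_of_eq ?_
        exact (tsum_image_aux
          (fun b => ENNReal.ofReal (Real.exp (birkhoff f τ b))) g S₁ hginj).symm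
  unfold Pinv
  exact Filter.limsup_congr (Filter.Eventually.of_forall fun τ => by rw [key])
end

section
/- For the one-dimensional linear control system ẋ(t) = a x(t) + ω(t) with a > 0 and control range U = [−1,1]: the interval D = (−1/a, 1/a) is controlled invariant and satisfies approximate controllability (D ⊆ closure(O⁺(x)) for all x ∈ D), the equilibrium pair is (x₀,u₀) = (−u₀/a, u₀) for u₀ ∈ int U, and for any f ∈ C([−1,1],ℝ) attaining its infimum at some u₀ ∈ (−1,1), and any compact K ⊆ D with nonempty interior, the invariance pressure satisfies P_inv(f,K,cl D) = inf f + a. -/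
open scoped ENNReal
open Filter Set

noncomputable section

/-- Solution map of the scalar linear control system `ẋ = a x + ω`. -/
def scalarPhi (a : ℝ) (t x : ℝ) (ω : ℝ → ℝ) : ℝ :=
  Real.exp (a * t) * x + ∫ s in (0:ℝ)..t, Real.exp (a * (t - s)) * ω s

open Filter MeasureTheory intervalIntegral
set_option maxHeartbeats 1000000

lemma integral_exp_mul' (A c d : ℝ) (hA : A ≠ 0) :
    ∫ s in c..d, Real.exp (A * s) = (Real.exp (A*d) - Real.exp (A*c))/A := by
  rw [intervalIntegral.integral_comp_mul_left (fun x => Real.exp x) hA, integral_exp]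
  simp only [smul_eq_mul]
  field_simp

lemma integral_exp_kernel (a t c d : ℝ) (ha : a ≠ 0) :
    ∫ s in c..d, Real.exp (a * (t - s)) = (Real.exp (a*(t-c)) - Real.exp (a*(t-d)))/a := by
  have h1 : ∀ s : ℝ, Real.exp (a * (t - s)) = Real.exp (a*t) * Real.exp ((-a) * s) := by
    intro s; rw [← Real.exp_add]; ring_nf
  simp only [h1]
  rw [intervalIntegral.integral_const_mul, integral_exp_mul' (-a) c d (neg_ne_zero.mpr ha)]
  rw [div_neg]
  ring

lemma phi_const (a t x u : ℝ) (ha : a ≠ 0) :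
    scalarPhi a t x (fun _ => u) = Real.exp (a*t) * (x + u/a) - u/a := by
  unfold scalarPhi
  rw [intervalIntegral.integral_mul_const, integral_exp_kernel a t 0 t ha]
  field_simp
  ring_nf
  simp only [Real.exp_zero, one_mul]

lemma step_intervalIntegrable (T v u c d : ℝ) :
    IntervalIntegrable (fun s : ℝ => if s ≤ T then v else u) volume c d := by
  have hm : Measurable (fun s : ℝ => if s ≤ T then v else u) :=
    Measurable.ite measurableSet_Iic measurable_const measurable_const
  rw [intervalIntegrable_iff]
  refine Integrable.mono' (g := fun _ => max |v| |u|)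
    ((integrableOn_const_iff (C := max |v| |u|)).mpr (Or.inr (by rw [Set.uIoc]; exact measure_Ioc_lt_top)))
    hm.aestronglyMeasurable ?_
  filter_upwards with s
  by_cases h : s ≤ T <;> simp only [h, if_true, if_false, Real.norm_eq_abs]
  · exact le_max_left _ _
  · exact le_max_right _ _

lemma phi_sub (a t x y : ℝ) (ω : ℝ → ℝ) :
    scalarPhi a t x ω - scalarPhi a t y ω = Real.exp (a*t) * (x - y) := by
  unfold scalarPhi; ring

lemma phi_concat (a T t x u v : ℝ) (ha : a ≠ 0) (hT : 0 ≤ T) (ht : T ≤ t) :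
    scalarPhi a t x (fun s => if s ≤ T then v else u) =
      Real.exp (a*t) * (x + v/a) - Real.exp (a*(t-T)) * (v/a)
        + Real.exp (a*(t-T)) * (u/a) - u/a := by
  unfold scalarPhi
  have hker : ∀ c d : ℝ, IntervalIntegrable
      (fun s => Real.exp (a * (t - s)) * (if s ≤ T then v else u)) volume c d := by
    intro c d
    exact (step_intervalIntegrable T v u c d).continuousOn_mul
      (Continuous.continuousOn (by continuity))
  rw [← intervalIntegral.integral_add_adjacent_intervals (hker 0 T) (hker T t)]
  have h1 : ∫ s in (0:ℝ)..T, Real.exp (a * (t - s)) * (if s ≤ T then v else u)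
      = ∫ s in (0:ℝ)..T, Real.exp (a * (t - s)) * v := by
    apply intervalIntegral.integral_congr
    intro s hs
    rw [Set.uIcc_of_le hT] at hs
    simp [hs.2]
  have h2 : ∫ s in T..t, Real.exp (a * (t - s)) * (if s ≤ T then v else u)
      = ∫ s in T..t, Real.exp (a * (t - s)) * u := by
    apply intervalIntegral.integral_congr_ae
    filter_upwards with s hs
    rw [Set.uIoc_of_le ht] at hs
    simp [not_le.mpr hs.1]
  rw [h1, h2, intervalIntegral.integral_mul_const, intervalIntegral.integral_mul_const,
    integral_exp_kernel a t 0 T ha, integral_exp_kernel a t T t ha]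
  field_simp
  ring_nf
  simp only [Real.exp_zero, one_mul]



lemma abs_lt_inv {a x : ℝ} (ha : 0 < a) (hx : x ∈ Set.Ioo (-(1/a)) (1/a)) : a * |x| < 1 := by
  obtain ⟨h1, h2⟩ := hx
  have hx' : |x| < 1/a := abs_lt.mpr ⟨h1, h2⟩
  calc a * |x| < a * (1/a) := by exact mul_lt_mul_of_pos_left hx' ha
    _ = 1 := by field_simp

lemma part1 (a : ℝ) (ha : 0 < a) :
    ControlledInvariant (scalarPhi a) {ω : ℝ → ℝ | ∀ t, ω t ∈ Set.Icc (-1:ℝ) 1}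
      (Set.Ioo (-(1/a)) (1/a)) := by
  intro x hx
  refine ⟨fun _ => -(a*x), fun t => ?_, fun t _ => ?_⟩
  · have := abs_lt_inv ha hx
    have hax : |a * x| < 1 := by rwa [abs_mul, abs_of_pos ha]
    rw [Set.mem_Icc, ← abs_le, abs_neg]
    exact hax.le
  · rw [phi_const a t x _ ha.ne']
    have h0 : x + -(a*x)/a = 0 := by field_simp; ring
    rw [h0, mul_zero, zero_sub, neg_div, neg_neg]
    have h1 : a * x / a = x := by field_simp
    rwa [h1]

lemma reach (a t x y : ℝ) (ha : a ≠ 0) (hE : Real.exp (a*t) - 1 ≠ 0) :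
    scalarPhi a t x (fun _ => a*(y - Real.exp (a*t)*x)/(Real.exp (a*t)-1)) = y := by
  rw [phi_const _ _ _ _ ha]
  field_simp
  ring

lemma part2 (a : ℝ) (ha : 0 < a) :
    ∀ x ∈ Set.Ioo (-(1/a)) (1/a), Set.Ioo (-(1/a)) (1/a) ⊆
      closure (posOrbit (scalarPhi a) {ω : ℝ → ℝ | ∀ t, ω t ∈ Set.Icc (-1:ℝ) 1} x) := by
  intro x hx y hy
  apply subset_closure
  have hax := abs_lt_inv ha hx
  have hp : 0 < 1 - a*|x| := by linarith
  obtain ⟨t, ht, hEbig⟩ : ∃ t : ℝ, 0 < t ∧ 1 + a*|y-x|/(1-a*|x|) ≤ Real.exp (a*t) := by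
    refine ⟨(1/a) * Real.log (1 + a*|y-x|/(1-a*|x|)) + 1, ?_, ?_⟩
    · have h0 : 0 ≤ a*|y-x|/(1-a*|x|) := div_nonneg (by positivity) hp.le
      have := Real.log_nonneg (by linarith : (1:ℝ) ≤ 1 + a*|y-x|/(1-a*|x|))
      have : 0 ≤ (1/a) * Real.log (1 + a*|y-x|/(1-a*|x|)) := by positivity
      linarith
    · have h0 : 0 ≤ a*|y-x|/(1-a*|x|) := div_nonneg (by positivity) hp.le
      have hlog : Real.log (1 + a*|y-x|/(1-a*|x|)) ≤
          a * ((1/a) * Real.log (1 + a*|y-x|/(1-a*|x|)) + 1) := by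
        have : a * ((1/a) * Real.log (1 + a*|y-x|/(1-a*|x|)) + 1)
            = Real.log (1 + a*|y-x|/(1-a*|x|)) + a := by field_simp
        rw [this]; linarith
      calc 1 + a*|y-x|/(1-a*|x|)
          = Real.exp (Real.log (1 + a*|y-x|/(1-a*|x|))) := by
            rw [Real.exp_log (by linarith)]
        _ ≤ _ := Real.exp_le_exp.mpr hlog
  have hE1 : 1 < Real.exp (a*t) := by
    rw [← Real.exp_zero]
    exact Real.exp_lt_exp.mpr (by positivity)
  have hE : 0 < Real.exp (a*t) - 1 := by linarith
  set u : ℝ := a*(y - Real.exp (a*t)*x)/(Real.exp (a*t)-1) with hu_def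
  refine ⟨t, ht, fun _ => u, fun s => ?_, reach a t x y ha.ne' hE.ne'⟩
  have key : u = -(a*x) + a*(y-x)/(Real.exp (a*t)-1) := by
    rw [hu_def]; field_simp; ring
  have hfrac : a*|y-x|/(Real.exp (a*t)-1) ≤ 1 - a*|x| := by
    rw [div_le_iff₀ hE]
    have h2 : a*|y-x|/(1-a*|x|) ≤ Real.exp (a*t) - 1 := by linarith
    calc a*|y-x| = (a*|y-x|/(1-a*|x|)) * (1-a*|x|) := by field_simp
      _ ≤ (Real.exp (a*t) - 1)*(1-a*|x|) := by nlinarith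
      _ = (1-a*|x|)*(Real.exp (a*t)-1) := by ring
  have habs : |u| ≤ a*|x| + a*|y-x|/(Real.exp (a*t)-1) := by
    rw [key]
    refine (abs_add_le _ _).trans ?_
    rw [abs_neg, abs_mul, abs_of_pos ha, abs_div, abs_mul, abs_of_pos ha, abs_of_pos hE]
  rw [Set.mem_Icc, ← abs_le]
  calc |u| ≤ a*|x| + a*|y-x|/(Real.exp (a*t)-1) := habs
    _ ≤ a*|x| + (1 - a*|x|) := by linarith
    _ = 1 := by ring

lemma part3 (a : ℝ) (ha : 0 < a) :
    ∀ u₀ ∈ Set.Ioo (-1:ℝ) 1, ∀ t : ℝ, 0 ≤ t →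
      scalarPhi a t (-(u₀/a)) (fun _ => u₀) = -(u₀/a) := by
  intro u₀ _ t _
  rw [phi_const a t _ u₀ ha.ne']
  rw [show -(u₀/a) + u₀/a = 0 by ring, mul_zero, zero_sub]

/-- control agreeing on `[0,t]` gives the same solution -/
lemma phi_congr (a t x : ℝ) (ω ω' : ℝ → ℝ) (ht : 0 ≤ t)
    (h : ∀ s ∈ Set.Icc 0 t, ω s = ω' s) :
    scalarPhi a t x ω = scalarPhi a t x ω' := by
  unfold scalarPhi
  congr 1
  apply intervalIntegral.integral_congr
  intro s hs
  rw [Set.uIcc_of_le ht] at hs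
  dsimp only
  rw [h s hs]

lemma integral_step (T τ A B : ℝ) (hT : 0 ≤ T) (hτ : T ≤ τ) :
    (∫ t in (0:ℝ)..τ, (if t ≤ T then A else B)) = T*A + (τ-T)*B := by
  rw [← intervalIntegral.integral_add_adjacent_intervals
    (step_intervalIntegrable T A B 0 T) (step_intervalIntegrable T A B T τ)]
  have h1 : (∫ t in (0:ℝ)..T, (if t ≤ T then A else B)) = ∫ _t in (0:ℝ)..T, A := by
    apply intervalIntegral.integral_congr
    intro s hs
    rw [Set.uIcc_of_le hT] at hs
    simp [hs.2]
  have h2 : (∫ t in T..τ, (if t ≤ T then A else B)) = ∫ _t in T..τ, B := by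
    apply intervalIntegral.integral_congr_ae
    filter_upwards with s hs
    rw [Set.uIoc_of_le hτ] at hs
    simp [not_le.mpr hs.1]
  rw [h1, h2, intervalIntegral.integral_const, intervalIntegral.integral_const]
  simp only [smul_eq_mul]
  ring

/-- The concatenated control: steer `z` to the equilibrium `-(u₀/a)` in time `T`,
then hold it there with constant control `u₀`. -/
def ctrl (a T u₀ z : ℝ) : ℝ → ℝ :=
  fun s => if s ≤ T then a*(-(u₀/a) - Real.exp (a*T)*z)/(Real.exp (a*T)-1) else u₀

lemma exp_gt_one {a T : ℝ} (ha : 0 < a) (hT : 0 < T) : 1 < Real.exp (a*T) := by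
  rw [← Real.exp_zero]; exact Real.exp_lt_exp.mpr (by positivity)

/-- trajectory of the center stays bounded by `max |z| (|u₀|/a)`. -/
lemma ctrl_traj_bound (a T u₀ z t : ℝ) (ha : 0 < a) (hT : 0 < T) (ht : 0 ≤ t) :
    |scalarPhi a t z (ctrl a T u₀ z)| ≤ max |z| (|u₀|/a) := by
  have hE1 : 1 < Real.exp (a*T) := exp_gt_one ha hT
  have hEne : Real.exp (a*T) - 1 ≠ 0 := by linarith
  set v : ℝ := a*(-(u₀/a) - Real.exp (a*T)*z)/(Real.exp (a*T)-1) with hv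
  have hreach : Real.exp (a*T) * (z + v/a) - v/a = -(u₀/a) := by
    have := reach a T z (-(u₀/a)) ha.ne' hEne
    rw [phi_const a T z _ ha.ne'] at this
    exact this
  by_cases htT : t ≤ T
  · -- first phase: constant control v
    have hφ : scalarPhi a t z (ctrl a T u₀ z) = Real.exp (a*t) * (z + v/a) - v/a := by
      rw [phi_congr a t z _ (fun _ => v) ht (by intro s hs; simp only [ctrl]; rw [if_pos (hs.2.trans htT)]),
        phi_const a t z v ha.ne']
    rw [hφ]
    -- value is a convex combination of z and -(u₀/a)
    have hva : v/a = (-(u₀/a) - Real.exp (a*T)*z)/(Real.exp (a*T)-1) := by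
      rw [hv, div_div, mul_comm (Real.exp (a*T)-1) a, mul_div_mul_left _ _ ha.ne']
    have hval : Real.exp (a*t) * (z + v/a) - v/a =
        ((Real.exp (a*T) - Real.exp (a*t))*z + (Real.exp (a*t)-1)*(-(u₀/a)))/(Real.exp (a*T)-1) := by
      rw [hva]; field_simp; ring
    rw [hval]
    have hE1t : 1 ≤ Real.exp (a*t) := by
      rw [← Real.exp_zero]; exact Real.exp_le_exp.mpr (by positivity)
    have hEtT : Real.exp (a*t) ≤ Real.exp (a*T) := Real.exp_le_exp.mpr (by nlinarith)
    rw [abs_div, abs_of_pos (by linarith : (0:ℝ) < Real.exp (a*T)-1), div_le_iff₀ (by linarith)]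
    have h1 : |(Real.exp (a*T) - Real.exp (a*t))*z| ≤ (Real.exp (a*T) - Real.exp (a*t)) * max |z| (|u₀|/a) := by
      rw [abs_mul, abs_of_nonneg (by linarith)]
      exact mul_le_mul_of_nonneg_left (le_max_left _ _) (by linarith)
    have h2 : |(Real.exp (a*t)-1)*(-(u₀/a))| ≤ (Real.exp (a*t)-1) * max |z| (|u₀|/a) := by
      rw [abs_mul, abs_of_nonneg (by linarith), abs_neg, abs_div, abs_of_pos ha]
      exact mul_le_mul_of_nonneg_left (le_max_right _ _) (by linarith)
    calc |(Real.exp (a*T) - Real.exp (a*t))*z + (Real.exp (a*t)-1)*(-(u₀/a))|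
        ≤ _ + _ := abs_add_le _ _
      _ ≤ (Real.exp (a*T) - Real.exp (a*t)) * max |z| (|u₀|/a)
          + (Real.exp (a*t)-1) * max |z| (|u₀|/a) := add_le_add h1 h2
      _ = max |z| (|u₀|/a) * (Real.exp (a*T) - 1) := by ring
  · -- second phase: sits at the equilibrium
    push_neg at htT
    have hφ : scalarPhi a t z (ctrl a T u₀ z) = -(u₀/a) := by
      rw [show ctrl a T u₀ z = fun s => if s ≤ T then v else u₀ from rfl,
        phi_concat a T t z u₀ v ha.ne' (by linarith) htT.le]
      have hsplit : Real.exp (a*t) = Real.exp (a*(t-T)) * Real.exp (a*T) := by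
        rw [← Real.exp_add]; ring_nf
      rw [hsplit]
      have : Real.exp (a*(t-T)) * Real.exp (a*T) * (z + v/a)
          = Real.exp (a*(t-T)) * (-(u₀/a) + v/a) := by
        rw [mul_assoc]
        congr 1
        linarith [hreach]
      rw [this]; ring
    rw [hφ, abs_neg, abs_div, abs_of_pos ha]
    exact le_max_right _ _

/-- the steering control value is admissible -/
lemma ctrl_mem (a T u₀ z s c : ℝ) (ha : 0 < a) (hT : 0 < T) (hu₀ : |u₀| ≤ 1)
    (hz : |z| ≤ c) (hc : a * c < 1)
    (hTbig : 2/(Real.exp (a*T)-1) ≤ 1 - a*c) :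
    ctrl a T u₀ z s ∈ Set.Icc (-1:ℝ) 1 := by
  rw [Set.mem_Icc, ← abs_le]
  unfold ctrl
  by_cases hs : s ≤ T
  · rw [if_pos hs]
    have hE1 : 1 < Real.exp (a*T) := exp_gt_one ha hT
    have hEpos : (0:ℝ) < Real.exp (a*T) - 1 := by linarith
    have key : a*(-(u₀/a) - Real.exp (a*T)*z)/(Real.exp (a*T)-1)
        = -(a*z) + a*(-(u₀/a) - z)/(Real.exp (a*T)-1) := by
      field_simp; ring
    rw [key]
    have hca : c ≤ 1/a := by
      rw [le_div_iff₀ ha]; nlinarith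
    have hnum : |a*(-(u₀/a) - z)| ≤ 2 := by
      rw [abs_mul, abs_of_pos ha]
      have h2 : |(-(u₀/a)) - z| ≤ |u₀|/a + |z| := by
        rw [sub_eq_add_neg]
        refine (abs_add_le _ _).trans ?_
        rw [abs_neg, abs_neg, abs_div, abs_of_pos ha]
      have h3 : |u₀|/a ≤ 1/a := by gcongr
      have h4 : |(-(u₀/a)) - z| ≤ 1/a + 1/a := by linarith [hz.trans hca]
      calc a * |(-(u₀/a)) - z| ≤ a * (1/a + 1/a) := by
            exact mul_le_mul_of_nonneg_left h4 ha.le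
        _ = 2 := by field_simp; ring
    have h1 : |a*(-(u₀/a) - z)/(Real.exp (a*T)-1)| ≤ 2/(Real.exp (a*T)-1) := by
      rw [abs_div, abs_of_pos hEpos]
      gcongr
    calc |(-(a*z)) + a*(-(u₀/a) - z)/(Real.exp (a*T)-1)|
        ≤ |(-(a*z))| + |a*(-(u₀/a) - z)/(Real.exp (a*T)-1)| := abs_add_le _ _
      _ ≤ a*c + 2/(Real.exp (a*T)-1) := by
          refine add_le_add ?_ h1
          rw [abs_neg, abs_mul, abs_of_pos ha]
          exact mul_le_mul_of_nonneg_left hz ha.le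
      _ ≤ 1 := by linarith
  · rw [if_neg hs]; exact hu₀






lemma spanSum_le (f : ℝ → ℝ) (τ b : ℝ) (S : Set (ℝ → ℝ)) (n : ℕ) (hcard : S.encard ≤ n)
    (hb : ∀ ω ∈ S, birkhoff f τ ω ≤ b) :
    spanSum f τ S ≤ ENNReal.ofReal (n * Real.exp b) := by
  calc spanSum f τ S ≤ ∑' _ω : S, ENNReal.ofReal (Real.exp b) := by
        apply ENNReal.tsum_le_tsum
        intro ω'
        exact ENNReal.ofReal_le_ofReal (Real.exp_le_exp.mpr (hb ω'.1 ω'.2))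
    _ = S.encard * ENNReal.ofReal (Real.exp b) := ENNReal.tsum_set_const _ _
    _ ≤ (n : ℝ≥0∞) * ENNReal.ofReal (Real.exp b) := by
        apply mul_le_mul' ?_ le_rfl
        exact_mod_cast ENat.toENNReal_le.mpr hcard
    _ = ENNReal.ofReal (n * Real.exp b) := by
        rw [ENNReal.ofReal_mul (by positivity), ENNReal.ofReal_natCast]

lemma aInv_upper (a c T F u₀ : ℝ) (f : ℝ → ℝ) (ha : 0 < a) (hc : 0 ≤ c) (hca : a*c < 1)
    (hT : 0 < T) (hTbig : 2/(Real.exp (a*T)-1) ≤ 1 - a*c)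
    (hu₀ : u₀ ∈ Set.Ioo (-1:ℝ) 1)
    (hF : ∀ y ∈ Set.Icc (-1:ℝ) 1, |f y| ≤ F)
    (K : Set ℝ) (hK : K ⊆ Set.Icc (-c) c) :
    ∃ C : ℝ, 0 < C ∧ ∀ τ, T ≤ τ →
      aInv (scalarPhi a) {ω : ℝ → ℝ | ∀ t, ω t ∈ Set.Icc (-1:ℝ) 1} f τ K
        (Set.Icc (-(1/a)) (1/a)) ≤ ENNReal.ofReal (C * Real.exp ((f u₀ + a)*τ)) := by
  obtain ⟨hu₀l, hu₀r⟩ := hu₀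
  have hu₀1 : |u₀| ≤ 1 := by rw [abs_le]; constructor <;> linarith
  set M₀ : ℝ := max c (|u₀|/a) with hM₀
  have hM₀a : M₀ < 1/a := by
    apply max_lt
    · rw [lt_div_iff₀ ha]; linarith
    · rw [div_lt_div_iff₀ ha ha]
      have : |u₀| < 1 := abs_lt.mpr ⟨hu₀l, hu₀r⟩
      nlinarith
  set ρ : ℝ := 1/a - M₀ with hρdef
  have hρ : 0 < ρ := by simp only [hρdef]; linarith
  refine ⟨(2*c/ρ + 2) * Real.exp (2*T*F), by positivity, fun τ hτ => ?_⟩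
  have hτ0 : 0 < τ := hT.trans_le hτ
  set η : ℝ := ρ * Real.exp (-(a*τ)) with hηdef
  have hη : 0 < η := by positivity
  set N : ℕ := ⌈2*c/η⌉₊ with hN
  set z : ℕ → ℝ := fun i => min c (-c + i*η) with hz
  have hzc : ∀ i, |z i| ≤ c := by
    intro i
    rw [hz, abs_le]
    simp only
    refine ⟨le_min (by linarith) ?_, min_le_left _ _⟩
    have h0 : (0:ℝ) ≤ i*η := by positivity
    linarith
  set ω : ℕ → (ℝ → ℝ) := fun i => ctrl a T u₀ (z i) with hω
  set S : Set (ℝ → ℝ) := ω '' (↑(Finset.range (N+1)) : Set ℕ) with hSdef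
  have hmem : ∀ i s, ω i s ∈ Set.Icc (-1:ℝ) 1 := fun i s =>
    ctrl_mem a T u₀ (z i) s c ha hT hu₀1 (hzc i) hca hTbig
  have hspan : IsSpanningSet (scalarPhi a) {ω : ℝ → ℝ | ∀ t, ω t ∈ Set.Icc (-1:ℝ) 1} τ K
      (Set.Icc (-(1/a)) (1/a)) S := by
    constructor
    · rintro _ ⟨i, _, rfl⟩ t
      exact hmem i t
    · intro x hx
      obtain ⟨hx1, hx2⟩ := hK hx
      set i : ℕ := ⌊(x+c)/η⌋₊ with hi
      have hxc : 0 ≤ (x+c)/η := div_nonneg (by linarith) hη.le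
      have hiN : i ≤ N := by
        apply (Nat.floor_le_floor (by gcongr <;> linarith : (x+c)/η ≤ 2*c/η)).trans
        exact Nat.floor_le_ceil _
      have h1 : -c + i*η ≤ x := by
        have := Nat.floor_le hxc
        rw [le_div_iff₀ hη] at this
        linarith
      have h2 : x < -c + (i+1)*η := by
        have := Nat.lt_floor_add_one ((x+c)/η)
        rw [div_lt_iff₀ hη] at this
        push_cast at this
        nlinarith
      have hclose : |x - z i| ≤ η := by
        rw [abs_le]
        rcases le_or_gt (-c + i*η) c with hle | hgt
        · rw [hz]
          simp only
          rw [min_eq_right hle]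
          constructor <;> nlinarith
        · have hxc' : z i = c := by rw [hz]; simp only; rw [min_eq_left hgt.le]
          rw [hxc']
          constructor <;> nlinarith
      refine ⟨ω i, ⟨i, by simp [Finset.mem_range, Nat.lt_succ_iff, hiN], rfl⟩, fun t ht => ?_⟩
      have hzb := ctrl_traj_bound a T u₀ (z i) t ha hT ht.1
      have hdiff : scalarPhi a t x (ω i) - scalarPhi a t (z i) (ω i)
          = Real.exp (a*t) * (x - z i) := phi_sub a t x (z i) (ω i)
      have hbM : |scalarPhi a t (z i) (ω i)| ≤ M₀ := by
        refine hzb.trans ?_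
        rw [hM₀]
        gcongr
        exact hzc i
      have hexp : Real.exp (a*t) * |x - z i| ≤ ρ := by
        calc Real.exp (a*t) * |x - z i| ≤ Real.exp (a*τ) * η :=
              mul_le_mul (Real.exp_le_exp.mpr (by nlinarith [ht.2])) hclose (abs_nonneg _)
                (Real.exp_nonneg _)
          _ = ρ := by
              rw [hηdef, ← mul_assoc, mul_comm (Real.exp (a*τ)) ρ, mul_assoc,
                ← Real.exp_add]
              simp only [add_neg_cancel, Real.exp_zero, mul_one]
      have : |scalarPhi a t x (ω i)| ≤ 1/a := by
        calc |scalarPhi a t x (ω i)|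
            = |scalarPhi a t (z i) (ω i) + Real.exp (a*t) * (x - z i)| := by
              congr 1; linarith [hdiff]
          _ ≤ |scalarPhi a t (z i) (ω i)| + Real.exp (a*t) * |x - z i| := by
              refine (abs_add_le _ _).trans ?_
              rw [abs_mul, abs_of_pos (Real.exp_pos _)]
          _ ≤ M₀ + ρ := add_le_add hbM hexp
          _ = 1/a := by rw [hρdef]; ring
      rw [Set.mem_Icc, ← abs_le]
      exact this
  -- sum bound
  have hbirk : ∀ ω' ∈ S, birkhoff f τ ω' ≤ f u₀ * τ + 2*T*F := by
    rintro _ ⟨i, _, rfl⟩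
    have hv0 : ω i 0 = a*(-(u₀/a) - Real.exp (a*T)*(z i))/(Real.exp (a*T)-1) := by
      rw [hω]; simp only [ctrl]; rw [if_pos hT.le]
    have hbb : birkhoff f τ (ω i)
        = T * f (a*(-(u₀/a) - Real.exp (a*T)*(z i))/(Real.exp (a*T)-1)) + (τ - T) * f u₀ := by
      unfold birkhoff
      have hi0 : ∀ t : ℝ, f (ω i t) = if t ≤ T then
          f (a*(-(u₀/a) - Real.exp (a*T)*(z i))/(Real.exp (a*T)-1)) else f u₀ := by
        intro t
        rw [hω]
        simp only [ctrl]
        by_cases h : t ≤ T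
        · rw [if_pos h, if_pos h]
        · rw [if_neg h, if_neg h]
      simp only [hi0]
      exact integral_step T τ _ _ hT.le hτ
    rw [hbb]
    have hf1 : |f (a*(-(u₀/a) - Real.exp (a*T)*(z i))/(Real.exp (a*T)-1))| ≤ F := by
      rw [← hv0]; exact hF _ (hmem i 0)
    have hf2 : |f u₀| ≤ F := hF _ (Set.mem_Icc.mpr ⟨by linarith, by linarith⟩)
    rw [abs_le] at hf1 hf2
    nlinarith
  have hcard : S.encard ≤ (N+1 : ℕ) := by
    refine (Set.encard_image_le _ _).trans ?_
    rw [Set.encard_coe_eq_coe_finsetCard, Finset.card_range]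
  have hfin := spanSum_le f τ (f u₀ * τ + 2*T*F) S (N+1) hcard hbirk
  refine le_trans (le_trans (iInf_le_of_le S (iInf_le_of_le hspan le_rfl)) hfin) ?_
  apply ENNReal.ofReal_le_ofReal
  have hN1 : (N+1 : ℝ) ≤ 2*c/η + 2 := by
    have h2 := Nat.ceil_lt_add_one (by positivity : (0:ℝ) ≤ 2*c/η)
    have h3 : (N : ℝ) < 2*c/η + 1 := by rw [hN]; exact_mod_cast h2
    linarith
  have hη' : 2*c/η = (2*c/ρ) * Real.exp (a*τ) := by
    rw [hηdef, div_mul_eq_div_div, Real.exp_neg, div_eq_mul_inv, inv_inv]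
  have hexp1 : (1:ℝ) ≤ Real.exp (a*τ) := by
    rw [← Real.exp_zero]; exact Real.exp_le_exp.mpr (by positivity)
  have hN2 : ((N+1 : ℕ) : ℝ) ≤ (2*c/ρ + 2) * Real.exp (a*τ) := by
    rw [hη'] at hN1
    push_cast
    nlinarith [div_nonneg (by linarith : (0:ℝ) ≤ 2*c) hρ.le]
  calc ((N+1 : ℕ) : ℝ) * Real.exp (f u₀ * τ + 2*T*F)
      ≤ (2*c/ρ + 2) * Real.exp (a*τ) * Real.exp (f u₀ * τ + 2*T*F) := by
        exact mul_le_mul_of_nonneg_right hN2 (Real.exp_nonneg _)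
    _ = (2*c/ρ + 2) * Real.exp (2*T*F) * Real.exp ((f u₀ + a)*τ) := by
        rw [mul_assoc, ← Real.exp_add, mul_assoc (2*c/ρ + 2) (Real.exp (2*T*F)),
          ← Real.exp_add]
        congr 1
        ring

/-- If the trajectory stays in `Q` at time `τ` but the free motion would have left,
the control must be integrable and hence the Birkhoff sum is at least `τ * f u₀`. -/
lemma good_birkhoff (a τ x u₀ : ℝ) (f : ℝ → ℝ) (ha : 0 < a) (hτ : 0 < τ)
    (hf : ContinuousOn f (Set.Icc (-1:ℝ) 1))
    (hfmin : ∀ u ∈ Set.Icc (-1:ℝ) 1, f u₀ ≤ f u)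
    (ω : ℝ → ℝ) (hω : ∀ t, ω t ∈ Set.Icc (-1:ℝ) 1)
    (hx : Real.exp (-(a*τ))/a < |x|)
    (hmem : scalarPhi a τ x ω ∈ Set.Icc (-(1/a)) (1/a)) :
    τ * f u₀ ≤ birkhoff f τ ω := by
  have hE : (0:ℝ) < Real.exp (a*τ) := Real.exp_pos _
  have hc : (∫ s in (0:ℝ)..τ, Real.exp (a*(τ-s)) * ω s) ≠ 0 := by
    intro h0
    have heq : scalarPhi a τ x ω = Real.exp (a*τ) * x := by
      unfold scalarPhi; rw [h0]; ring
    obtain ⟨h1, h2⟩ := hmem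
    rw [heq] at h1 h2
    have hxbig : 1/a < Real.exp (a*τ) * |x| := by
      rw [Real.exp_neg, div_lt_iff₀ ha] at hx
      rw [div_lt_iff₀ ha]
      nlinarith [mul_lt_mul_of_pos_left hx hE, mul_inv_cancel₀ hE.ne']
    rcases abs_cases x with ⟨hax, _⟩ | ⟨hax, _⟩
    · rw [hax] at hxbig; nlinarith
    · rw [hax] at hxbig; nlinarith
  have hint : IntervalIntegrable (fun s => Real.exp (a*(τ-s)) * ω s) volume 0 τ := by
    by_contra h
    exact hc (intervalIntegral.integral_undef h)
  have hωint : IntervalIntegrable ω volume 0 τ := by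
    have h2 := hint.continuousOn_mul (g := fun s => Real.exp (-(a*(τ-s))))
      (Continuous.continuousOn (by continuity))
    have h3 : (fun s => Real.exp (-(a*(τ-s))) * (Real.exp (a*(τ-s)) * ω s)) = ω := by
      funext s
      rw [← mul_assoc, ← Real.exp_add, neg_add_cancel, Real.exp_zero, one_mul]
    rwa [h3] at h2
  set g : ℝ → ℝ := fun y => f (max (-1) (min 1 y)) with hg
  have hgc : Continuous g := by
    apply hf.comp_continuous (continuous_const.max (continuous_const.min continuous_id))
    intro y
    refine ⟨le_max_left _ _, max_le (by norm_num) (min_le_left _ _)⟩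
  have hfg : ∀ t, f (ω t) = g (ω t) := by
    intro t
    obtain ⟨h1, h2⟩ := hω t
    rw [hg]
    simp only
    rw [min_eq_right h2, max_eq_right h1]
  obtain ⟨F, hF⟩ := isCompact_Icc.exists_bound_of_continuousOn hf
  have hfint : IntervalIntegrable (fun t => f (ω t)) volume 0 τ := by
    simp only [hfg]
    rw [intervalIntegrable_iff]
    have hmeas : AEStronglyMeasurable (fun t => g (ω t)) (volume.restrict (Set.uIoc 0 τ)) := by
      apply hgc.comp_aestronglyMeasurable
      rw [Set.uIoc_of_le hτ.le]
      exact hωint.1.aestronglyMeasurable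
    refine Integrable.mono' (g := fun _ => F)
      ((integrableOn_const_iff (C := F)).mpr (Or.inr (by rw [Set.uIoc]; exact measure_Ioc_lt_top))) hmeas ?_
    filter_upwards with t
    rw [← hfg t, Real.norm_eq_abs]
    exact hF (ω t) (hω t)
  have hconst : IntervalIntegrable (fun _ => f u₀) volume 0 τ := intervalIntegrable_const
  have hle := intervalIntegral.integral_mono_on hτ.le hconst hfint
    (fun t _ => hfmin (ω t) (hω t))
  rw [intervalIntegral.integral_const, smul_eq_mul, sub_zero] at hle
  exact hle

lemma serve_subset (a τ x : ℝ) (ω : ℝ → ℝ) (ha : 0 < a)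
    (hmem : scalarPhi a τ x ω ∈ Set.Icc (-(1/a)) (1/a)) :
    x ∈ Set.Icc ((-(1/a) - ∫ s in (0:ℝ)..τ, Real.exp (a*(τ-s)) * ω s)/Real.exp (a*τ))
      ((1/a - ∫ s in (0:ℝ)..τ, Real.exp (a*(τ-s)) * ω s)/Real.exp (a*τ)) := by
  obtain ⟨h1, h2⟩ := hmem
  unfold scalarPhi at h1 h2
  have hE : (0:ℝ) < Real.exp (a*τ) := Real.exp_pos _
  constructor
  · rw [div_le_iff₀ hE]; nlinarith
  · rw [le_div_iff₀ hE]; nlinarith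

lemma aInv_lower (a u₀ α β : ℝ) (f : ℝ → ℝ) (ha : 0 < a) (hαβ : α < β)
    (hf : ContinuousOn f (Set.Icc (-1:ℝ) 1))
    (hfmin : ∀ u ∈ Set.Icc (-1:ℝ) 1, f u₀ ≤ f u)
    (K : Set ℝ) (hαβK : Set.Icc α β ⊆ K) :
    ∃ C T₂ : ℝ, 0 < C ∧ 0 < T₂ ∧ ∀ τ, T₂ ≤ τ →
      ENNReal.ofReal (C * Real.exp ((f u₀ + a)*τ)) ≤
        aInv (scalarPhi a) {ω : ℝ → ℝ | ∀ t, ω t ∈ Set.Icc (-1:ℝ) 1} f τ K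
          (Set.Icc (-(1/a)) (1/a)) := by
  have hβα : (0:ℝ) < β - α := sub_pos.mpr hαβ
  refine ⟨(β-α)*a/4, max 1 ((1/a)*Real.log (4/(a*(β-α)))), by positivity,
    lt_max_of_lt_left one_pos, fun τ hτ => ?_⟩
  have hτ1 : (1:ℝ) ≤ τ := le_trans (le_max_left _ _) hτ
  have hτ0 : 0 < τ := lt_of_lt_of_le one_pos hτ1
  have hE : (0:ℝ) < Real.exp (a*τ) := Real.exp_pos _
  set r : ℝ := Real.exp (-(a*τ))/a with hrdef
  have hrpos : 0 < r := by positivity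
  have hr : 2*r ≤ (β-α)/2 := by
    have h1 : (1/a)*Real.log (4/(a*(β-α))) ≤ τ := le_trans (le_max_right _ _) hτ
    have h2 : Real.log (4/(a*(β-α))) ≤ a*τ := by
      calc Real.log (4/(a*(β-α))) = a*((1/a)*Real.log (4/(a*(β-α)))) := by
            field_simp
        _ ≤ a*τ := mul_le_mul_of_nonneg_left h1 ha.le
    have hXpos : (0:ℝ) < 4/(a*(β-α)) := by positivity
    have h3 : 4/(a*(β-α)) ≤ Real.exp (a*τ) := by
      calc 4/(a*(β-α)) = Real.exp (Real.log (4/(a*(β-α)))) := (Real.exp_log hXpos).symm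
        _ ≤ Real.exp (a*τ) := Real.exp_le_exp.mpr h2
    have h4 : Real.exp (-(a*τ)) ≤ a*(β-α)/4 := by
      rw [Real.exp_neg]
      have h5 : (Real.exp (a*τ))⁻¹ ≤ (4/(a*(β-α)))⁻¹ := inv_anti₀ hXpos h3
      have h6 : (4/(a*(β-α)))⁻¹ = a*(β-α)/4 := by field_simp
      linarith
    rw [hrdef]
    have h7 : Real.exp (-(a*τ))/a ≤ (β-α)/4 := by
      rw [div_le_iff₀ ha]
      calc Real.exp (-(a*τ)) ≤ a*(β-α)/4 := h4
        _ = (β-α)/4 * a := by ring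
    linarith
  -- the infimum bound
  refine le_iInf fun S => le_iInf fun hS => ?_
  set L : ℝ := f u₀ + a with hL
  set cω : (ℝ → ℝ) → ℝ := fun ω' => ∫ s in (0:ℝ)..τ, Real.exp (a*(τ-s)) * ω' s with hcω
  set Y : (ℝ → ℝ) → Set ℝ :=
    fun ω' => Set.Icc ((-(1/a) - cω ω')/Real.exp (a*τ)) ((1/a - cω ω')/Real.exp (a*τ)) with hY
  set S' : Set (ℝ → ℝ) := {ω' ∈ S | τ * f u₀ ≤ birkhoff f τ ω'} with hS'
  have hS'S : S' ⊆ S := fun ω' h => h.1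
  -- spanSum is at least the sum over S'
  have hge : S'.encard * ENNReal.ofReal (Real.exp (τ * f u₀)) ≤ spanSum f τ S := by
    calc S'.encard * ENNReal.ofReal (Real.exp (τ * f u₀))
        = ∑' _ω' : S', ENNReal.ofReal (Real.exp (τ * f u₀)) :=
          (ENNReal.tsum_set_const _ _).symm
      _ ≤ spanSum f τ S := by
          unfold spanSum
          rw [tsum_subtype S' (fun _ => ENNReal.ofReal (Real.exp (τ * f u₀))),
            tsum_subtype S (fun ω' => ENNReal.ofReal (Real.exp (birkhoff f τ ω')))]
          apply ENNReal.tsum_le_tsum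
          intro ω'
          by_cases h : ω' ∈ S'
          · rw [Set.indicator_of_mem h, Set.indicator_of_mem (hS'S h)]
            exact ENNReal.ofReal_le_ofReal (Real.exp_le_exp.mpr h.2)
          · rw [Set.indicator_of_notMem h]
            exact zero_le
  -- every point of the annulus is served by some element of S'
  have hcover : Set.Icc α β \ Set.Icc (-r) r ⊆ ⋃ ω' ∈ S', Y ω' := by
    intro x hx
    obtain ⟨hxI, hxr⟩ := hx
    obtain ⟨ω', hω'S, hserve⟩ := hS.2 x (hαβK hxI)
    have hQ := hserve τ ⟨hτ0.le, le_rfl⟩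
    have hxabs : r < |x| := by
      rw [Set.mem_Icc, not_and_or, not_le, not_le] at hxr
      rcases hxr with h | h
      · calc r < -x := by linarith
          _ ≤ |x| := neg_le_abs x
      · exact h.trans_le (le_abs_self x)
    have hgood : τ * f u₀ ≤ birkhoff f τ ω' :=
      good_birkhoff a τ x u₀ f ha hτ0 hf hfmin ω' (hS.1 hω'S) (hrdef ▸ hxabs) hQ
    exact Set.mem_biUnion ⟨hω'S, hgood⟩ (serve_subset a τ x ω' ha hQ)
  -- cardinality estimate
  have hcard : ENNReal.ofReal ((β-α)*a/4 * Real.exp (a*τ)) ≤ S'.encard := by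
    rcases Set.finite_or_infinite S' with hfin | hinf
    · have hvol1 : ENNReal.ofReal ((β-α)/2) ≤ volume (Set.Icc α β \ Set.Icc (-r) r) := by
        have h1 : volume (Set.Icc α β) - volume (Set.Icc (-r) r) ≤
            volume (Set.Icc α β \ Set.Icc (-r) r) := le_measure_diff
        rw [Real.volume_Icc, Real.volume_Icc] at h1
        have h2 : ENNReal.ofReal ((β-α)/2) ≤ ENNReal.ofReal (β - α) - ENNReal.ofReal (r - -r) := by
          rw [← ENNReal.ofReal_sub _ (by linarith : (0:ℝ) ≤ r - -r)]
          apply ENNReal.ofReal_le_ofReal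
          linarith
        exact h2.trans h1
      have hvol2 : volume (Set.Icc α β \ Set.Icc (-r) r) ≤
          S'.encard * ENNReal.ofReal (2*r) := by
        refine (measure_mono hcover).trans ?_
        refine (measure_biUnion_le volume hfin.countable Y).trans ?_
        have hYvol : ∀ ω' : S', volume (Y ω'.1) ≤ ENNReal.ofReal (2*r) := by
          intro ω'
          rw [hY]
          simp only
          rw [Real.volume_Icc]
          have heq : (1/a - cω ω'.1)/Real.exp (a*τ) - (-(1/a) - cω ω'.1)/Real.exp (a*τ)
              = 2*r := by
            rw [hrdef, Real.exp_neg]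
            field_simp
            ring
          rw [heq]
        calc ∑' ω' : S', volume (Y ω'.1) ≤ ∑' _ω' : S', ENNReal.ofReal (2*r) :=
              ENNReal.tsum_le_tsum hYvol
          _ = S'.encard * ENNReal.ofReal (2*r) := ENNReal.tsum_set_const _ _
      have hkey : ENNReal.ofReal ((β-α)*a/4 * Real.exp (a*τ)) * ENNReal.ofReal (2*r) ≤
          S'.encard * ENNReal.ofReal (2*r) := by
        have hEE : Real.exp (a*τ) * Real.exp (-(a*τ)) = 1 := by
          rw [← Real.exp_add]; simp
        have heq : ((β-α)*a/4 * Real.exp (a*τ)) * (2*r) = (β-α)/2 := by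
          rw [hrdef]
          field_simp
          linear_combination 4 * hEE
        rw [← ENNReal.ofReal_mul (by positivity), heq]
        exact hvol1.trans hvol2
      exact (ENNReal.mul_le_mul_iff_left (by positivity) ENNReal.ofReal_ne_top).mp hkey
    · rw [Set.Infinite.encard_eq hinf]
      exact le_top
  -- combine
  calc ENNReal.ofReal ((β-α)*a/4 * Real.exp (L*τ))
      = ENNReal.ofReal ((β-α)*a/4 * Real.exp (a*τ)) * ENNReal.ofReal (Real.exp (τ * f u₀)) := by
        rw [← ENNReal.ofReal_mul (by positivity)]
        congr 1
        rw [mul_assoc, ← Real.exp_add, hL]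
        congr 2
        ring
    _ ≤ S'.encard * ENNReal.ofReal (Real.exp (τ * f u₀)) :=
        mul_le_mul_left hcard _
    _ ≤ spanSum f τ S := hge

lemma exists_T (a b : ℝ) (ha : 0 < a) (hb : 0 < b) :
    ∃ T : ℝ, 0 < T ∧ 2/(Real.exp (a*T)-1) ≤ b := by
  have h2b : 0 < 2/b := by positivity
  have hlog : 0 ≤ Real.log (1 + 2/b) := Real.log_nonneg (by linarith)
  refine ⟨(1/a)*Real.log (1 + 2/b) + 1, by positivity, ?_⟩
  have hX : 1 + 2/b ≤ Real.exp (a*((1/a)*Real.log (1 + 2/b) + 1)) := by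
    have h1 : a*((1/a)*Real.log (1 + 2/b) + 1) = Real.log (1 + 2/b) + a := by
      field_simp
    rw [h1]
    calc 1 + 2/b = Real.exp (Real.log (1 + 2/b)) := (Real.exp_log (by linarith)).symm
      _ ≤ _ := Real.exp_le_exp.mpr (by linarith)
  have hE : 2/b ≤ Real.exp (a*((1/a)*Real.log (1 + 2/b) + 1)) - 1 := by linarith
  calc 2/(Real.exp (a*((1/a)*Real.log (1 + 2/b) + 1))-1) ≤ 2/(2/b) :=
        div_le_div_of_nonneg_left (by norm_num) h2b hE
    _ = b := by field_simp

lemma tendsto_aux (C L : ℝ) :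
    Filter.Tendsto (fun τ : ℝ => τ⁻¹*(C + L*τ)) Filter.atTop (nhds L) := by
  have h1 : Filter.Tendsto (fun τ : ℝ => C * τ⁻¹ + L) Filter.atTop (nhds (C * 0 + L)) :=
    (tendsto_inv_atTop_zero.const_mul C).add_const L
  rw [mul_zero, zero_add] at h1
  apply h1.congr'
  filter_upwards [eventually_ge_atTop 1] with τ hτ
  have hτ0 : τ ≠ 0 := by positivity
  field_simp

lemma part4 (a : ℝ) (ha : 0 < a) (f : ℝ → ℝ) (hf : ContinuousOn f (Set.Icc (-1:ℝ) 1))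
    (u₀ : ℝ) (hu₀ : u₀ ∈ Set.Ioo (-1:ℝ) 1) (hmin : ∀ u ∈ Set.Icc (-1:ℝ) 1, f u₀ ≤ f u)
    (K : Set ℝ) (hK : IsCompact K) (hKD : K ⊆ Set.Ioo (-(1/a)) (1/a))
    (hKi : (interior K).Nonempty) :
    Pinv (scalarPhi a) {ω : ℝ → ℝ | ∀ t, ω t ∈ Set.Icc (-1:ℝ) 1} f K
      (Set.Icc (-(1/a)) (1/a)) = ((f u₀ + a : ℝ) : EReal) := by
  obtain ⟨z, hz⟩ := hKi
  obtain ⟨ε, hε, hball⟩ := Metric.isOpen_iff.mp isOpen_interior z hz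
  have hαβ : z - ε/2 < z + ε/2 := by linarith
  have hIK : Set.Icc (z - ε/2) (z + ε/2) ⊆ K := by
    intro y hy
    refine interior_subset (hball ?_)
    rw [Metric.mem_ball, Real.dist_eq, abs_lt]
    obtain ⟨h1, h2⟩ := hy
    constructor <;> linarith
  have hKne : K.Nonempty := ⟨z, interior_subset hz⟩
  obtain ⟨x₀, hx₀K, hx₀max⟩ := hK.exists_isMaxOn hKne continuous_abs.continuousOn
  have hc : 0 ≤ |x₀| := abs_nonneg _
  have hKc : K ⊆ Set.Icc (-|x₀|) |x₀| := by
    intro x hx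
    rw [Set.mem_Icc, ← abs_le]
    exact hx₀max hx
  have hca : a*|x₀| < 1 := abs_lt_inv ha (hKD hx₀K)
  obtain ⟨T, hT, hTbig⟩ := exists_T a (1 - a*|x₀|) ha (by linarith)
  obtain ⟨F, hF⟩ := isCompact_Icc.exists_bound_of_continuousOn hf
  obtain ⟨C₂, hC₂, hupper⟩ := aInv_upper a |x₀| T F u₀ f ha hc hca hT hTbig hu₀
    (fun y hy => hF y hy) K hKc
  obtain ⟨C₁, T₂, hC₁, hT₂0, hlower⟩ := aInv_lower a u₀ (z - ε/2) (z + ε/2) f ha hαβ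
    hf hmin K hIK
  set L : ℝ := f u₀ + a with hL
  set A : ℝ → ℝ≥0∞ := fun τ => aInv (scalarPhi a)
    {ω : ℝ → ℝ | ∀ t, ω t ∈ Set.Icc (-1:ℝ) 1} f τ K (Set.Icc (-(1/a)) (1/a)) with hA
  set R : ℝ → ℝ := fun τ => τ⁻¹ * (ENNReal.log (A τ)).toReal with hR
  have hbound : ∀ τ, max 1 (max T T₂) ≤ τ →
      ((τ:EReal)⁻¹ * ENNReal.log (A τ) = ((R τ : ℝ) : EReal)
      ∧ τ⁻¹*(Real.log C₁ + L*τ) ≤ R τ ∧ R τ ≤ τ⁻¹*(Real.log C₂ + L*τ)) := by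
    intro τ hτ
    have hτ1 : 1 ≤ τ := le_trans (le_max_left _ _) hτ
    have hτ0 : 0 < τ := lt_of_lt_of_le one_pos hτ1
    have h1 := hlower τ (le_trans (le_trans (le_max_right T T₂) (le_max_right 1 _)) hτ)
    have h2 := hupper τ (le_trans (le_trans (le_max_left T T₂) (le_max_right 1 _)) hτ)
    have hb1 : ((Real.log C₁ + L*τ : ℝ) : EReal) ≤ ENNReal.log (A τ) := by
      have h3 := ENNReal.log_monotone h1
      rwa [ENNReal.log_ofReal, if_neg (not_le.mpr (by positivity)),
        Real.log_mul hC₁.ne' (Real.exp_ne_zero _), Real.log_exp] at h3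
    have hb2 : ENNReal.log (A τ) ≤ ((Real.log C₂ + L*τ : ℝ) : EReal) := by
      have h3 := ENNReal.log_monotone h2
      rwa [ENNReal.log_ofReal, if_neg (not_le.mpr (by positivity)),
        Real.log_mul hC₂.ne' (Real.exp_ne_zero _), Real.log_exp] at h3
    have hne_top : ENNReal.log (A τ) ≠ ⊤ := (hb2.trans_lt (EReal.coe_lt_top _)).ne
    have hne_bot : ENNReal.log (A τ) ≠ ⊥ := ((EReal.bot_lt_coe _).trans_le hb1).ne'
    have hAeq : ((ENNReal.log (A τ)).toReal : EReal) = ENNReal.log (A τ) :=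
      EReal.coe_toReal hne_top hne_bot
    have hcoe1 : Real.log C₁ + L*τ ≤ (ENNReal.log (A τ)).toReal := by
      rw [← EReal.coe_le_coe_iff, hAeq]; exact hb1
    have hcoe2 : (ENNReal.log (A τ)).toReal ≤ Real.log C₂ + L*τ := by
      rw [← EReal.coe_le_coe_iff, hAeq]; exact hb2
    refine ⟨?_, ?_, ?_⟩
    · rw [← hAeq, ← EReal.coe_inv, ← EReal.coe_mul]
    · exact mul_le_mul_of_nonneg_left hcoe1 (inv_nonneg.mpr hτ0.le)
    · exact mul_le_mul_of_nonneg_left hcoe2 (inv_nonneg.mpr hτ0.le)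
  have hRlim : Filter.Tendsto R Filter.atTop (nhds L) := by
    refine tendsto_of_tendsto_of_tendsto_of_le_of_le' (tendsto_aux (Real.log C₁) L)
      (tendsto_aux (Real.log C₂) L) ?_ ?_
    · filter_upwards [eventually_ge_atTop (max 1 (max T T₂))] with τ hτ
      exact (hbound τ hτ).2.1
    · filter_upwards [eventually_ge_atTop (max 1 (max T T₂))] with τ hτ
      exact (hbound τ hτ).2.2
  have hglim : Filter.Tendsto (fun τ : ℝ => (τ:EReal)⁻¹ * ENNReal.log (A τ))
      Filter.atTop (nhds ((L : ℝ) : EReal)) := by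
    apply Filter.Tendsto.congr' ?_ (EReal.tendsto_coe.mpr hRlim)
    filter_upwards [eventually_ge_atTop (max 1 (max T T₂))] with τ hτ
    exact ((hbound τ hτ).1).symm
  exact hglim.limsup_eq

/-- for `ẋ = ax + ω`, `a > 0`, `U = [-1,1]`: `D = (-1/a,1/a)` is controlled
invariant and approximately controllable, `(-u₀/a, u₀)` is an equilibrium pair for
`u₀ ∈ int U`, and for potentials attaining their minimum at an interior control value,
`P_inv(f,K,cl D) = inf f + a`. -/
theorem stmt18 (a : ℝ) (ha : 0 < a) :
    ControlledInvariant (scalarPhi a) {ω : ℝ → ℝ | ∀ t, ω t ∈ Set.Icc (-1:ℝ) 1}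
      (Set.Ioo (-(1/a)) (1/a)) ∧
    (∀ x ∈ Set.Ioo (-(1/a)) (1/a), Set.Ioo (-(1/a)) (1/a) ⊆
      closure (posOrbit (scalarPhi a) {ω : ℝ → ℝ | ∀ t, ω t ∈ Set.Icc (-1:ℝ) 1} x)) ∧
    (∀ u₀ ∈ Set.Ioo (-1:ℝ) 1, ∀ t : ℝ, 0 ≤ t →
      scalarPhi a t (-(u₀/a)) (fun _ => u₀) = -(u₀/a)) ∧
    ∀ f : ℝ → ℝ, ContinuousOn f (Set.Icc (-1:ℝ) 1) →
      ∀ u₀ ∈ Set.Ioo (-1:ℝ) 1, (∀ u ∈ Set.Icc (-1:ℝ) 1, f u₀ ≤ f u) →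
      ∀ K : Set ℝ, IsCompact K → K ⊆ Set.Ioo (-(1/a)) (1/a) → (interior K).Nonempty →
        Pinv (scalarPhi a) {ω : ℝ → ℝ | ∀ t, ω t ∈ Set.Icc (-1:ℝ) 1} f K
          (Set.Icc (-(1/a)) (1/a)) = ((f u₀ + a : ℝ) : EReal) := by
  exact ⟨part1 a ha, part2 a ha, part3 a ha,
    fun f hf u₀ hu₀ hmin K hK hKD hKi => part4 a ha f hf u₀ hu₀ hmin K hK hKD hKi⟩

end
end
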